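/- Let Θ and 𝒟 be finite types, let q be a probability distribution on Θ × 𝒟 with q(θ,d) > 0 for all (θ,d), and fix D ∈ 𝒟. Let q_D = ∑ θ, q(θ,D) (so q_D > 0) and define p*(θ,d) = q(θ,D)/q_D if d = D and p*(θ,d) = 0 otherwise. Then for every probability distribution p on Θ × 𝒟 satisfying p(θ,d) = 0 whenever d ≠ D, the relative entropy satisfies S[p,q] = −∑ (θ,d), p(θ,d) * log (p(θ,d) / q(θ,d)) ≤ S[p*,q] = log q_D, with equality if and only if p = p*. -/

import Mathlib

open Finset


private lemma gibbs_term {a c : ℝ} (ha : 0 ≤ a) (hc : 0 < c) :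
    a - c ≤ a * Real.log (a / c) ∧ (a - c = a * Real.log (a / c) ↔ a = c) := by
  rcases eq_or_lt_of_le ha with h | h
  · simp [← h, hc.ne, hc.ne']
    linarith
  · have hca : 0 < c / a := div_pos hc h
    have hlog : Real.log (a / c) = - Real.log (c / a) := by
      rw [← Real.log_inv, inv_div]
    rcases eq_or_ne (c / a) 1 with h1 | h1
    · have : a = c := by field_simp at h1; linarith
      subst this
      simp [hlog, h1]
    · have hstrict := Real.log_lt_sub_one_of_pos hca h1
      have : a * Real.log (a / c) > a - c := by
        rw [hlog]
        have := mul_lt_mul_of_pos_left hstrict h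
        have hca' : a * (c / a - 1) = c - a := by field_simp
        nlinarith
      constructor
      · linarith
      · constructor
        · intro he; linarith
        · intro he; exfalso; rw [he] at h1; simp [div_self hc.ne'] at h1

private lemma gibbs_sum {ι : Type*} [Fintype ι] (a c : ι → ℝ)
    (ha0 : ∀ i, 0 ≤ a i) (hc0 : ∀ i, 0 < c i)
    (ha1 : ∑ i, a i = 1) (hc1 : ∑ i, c i = 1) :
    0 ≤ ∑ i, a i * Real.log (a i / c i) ∧
      (∑ i, a i * Real.log (a i / c i) = 0 ↔ a = c) := by
  have hterm : ∀ i ∈ Finset.univ, a i - c i ≤ a i * Real.log (a i / c i) :=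
    fun i _ => (gibbs_term (ha0 i) (hc0 i)).1
  have hsum : ∑ i, (a i - c i) = 0 := by
    rw [Finset.sum_sub_distrib, ha1, hc1]; ring
  constructor
  · calc (0:ℝ) = ∑ i, (a i - c i) := hsum.symm
      _ ≤ _ := Finset.sum_le_sum hterm
  · rw [← hsum, eq_comm, Finset.sum_eq_sum_iff_of_le hterm]
    constructor
    · intro h
      funext i
      exact (gibbs_term (ha0 i) (hc0 i)).2.mp (h i (Finset.mem_univ i))
    · intro h i _
      exact (gibbs_term (ha0 i) (hc0 i)).2.mpr (congrFun h i)

/-- The Caticha–Giffin result that Bayes' rule is a special case of maximum entropy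
updating: among all joint posteriors `p` on `Θ × 𝒟` supported on the observed datum
`D`, the relative entropy `S[p,q]` relative to the (strictly positive) prior `q` is
maximized exactly by `p*(θ,d) = δ_{dD} · q(θ,D)/q_D`, and the maximal value is
`log q_D` where `q_D = ∑ θ, q(θ,D)`. -/
theorem bayes_rule_is_max_entropy {Θ 𝒟 : Type*} [Fintype Θ] [Fintype 𝒟] [DecidableEq 𝒟]
    (q : Θ × 𝒟 → ℝ) (hq0 : ∀ z, 0 < q z) (hq1 : ∑ z, q z = 1)
    (D : 𝒟) (qD : ℝ) (hqD : qD = ∑ θ, q (θ, D))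
    (pstar : Θ × 𝒟 → ℝ)
    (hpstar : ∀ θ d, pstar (θ, d) = if d = D then q (θ, D) / qD else 0)
    (p : Θ × 𝒟 → ℝ) (hp0 : ∀ z, 0 ≤ p z) (hp1 : ∑ z, p z = 1)
    (hsupp : ∀ θ d, d ≠ D → p (θ, d) = 0) :
    (-∑ z, p z * Real.log (p z / q z) ≤ -∑ z, pstar z * Real.log (pstar z / q z)) ∧
      (-∑ z, pstar z * Real.log (pstar z / q z) = Real.log qD) ∧
      (-∑ z, p z * Real.log (p z / q z) = -∑ z, pstar z * Real.log (pstar z / q z)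
        ↔ p = pstar) := by
  have hΘ : Nonempty Θ := by
    by_contra h
    rw [not_nonempty_iff] at h
    simp at hp1
  have hqDpos : 0 < qD := by
    rw [hqD]
    exact Finset.sum_pos (fun θ _ => hq0 (θ, D)) Finset.univ_nonempty
  set a : Θ → ℝ := fun θ => p (θ, D) with ha_def
  set c : Θ → ℝ := fun θ => q (θ, D) / qD with hc_def
  have hc0 : ∀ θ, 0 < c θ := fun θ => div_pos (hq0 (θ, D)) hqDpos
  have hc1 : ∑ θ, c θ = 1 := by
    rw [← Finset.sum_div, ← hqD, div_self hqDpos.ne']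
  have ha1 : ∑ θ, a θ = 1 := by
    rw [← hp1, Fintype.sum_prod_type]
    refine Finset.sum_congr rfl fun θ _ => ?_
    rw [Finset.sum_eq_single D (fun d _ hd => hsupp θ d hd) (by simp)]
  -- compute S*
  have hSstar : ∑ z, pstar z * Real.log (pstar z / q z) = - Real.log qD := by
    rw [Fintype.sum_prod_type]
    have : ∀ θ : Θ, ∑ d, pstar (θ, d) * Real.log (pstar (θ, d) / q (θ, d))
        = c θ * (- Real.log qD) := by
      intro θ
      rw [Finset.sum_eq_single D (fun d _ hd => by simp [hpstar θ d, hd]) (by simp)]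
      rw [hpstar θ D, if_pos rfl]
      have hx : q (θ, D) / qD / q (θ, D) = qD⁻¹ := by
        field_simp
        exact div_self (hq0 (θ, D)).ne'
      rw [hx, Real.log_inv]
    rw [Finset.sum_congr rfl fun θ _ => this θ, ← Finset.sum_mul, hc1, one_mul]
  -- compute S in terms of a, c
  have hS : ∑ z, p z * Real.log (p z / q z)
      = (∑ θ, a θ * Real.log (a θ / c θ)) - Real.log qD := by
    rw [Fintype.sum_prod_type]
    have : ∀ θ : Θ, ∑ d, p (θ, d) * Real.log (p (θ, d) / q (θ, d))
        = a θ * Real.log (a θ / c θ) - a θ * Real.log qD := by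
      intro θ
      rw [Finset.sum_eq_single D (fun d _ hd => by simp [hsupp θ d hd]) (by simp)]
      rcases eq_or_lt_of_le (hp0 (θ, D)) with h0 | h0
      · simp [ha_def, ← h0]
      · have : a θ / c θ = a θ / q (θ, D) * qD := by
          field_simp [hc_def]
          rw [hc_def]; field_simp
        rw [this, Real.log_mul (div_pos h0 (hq0 (θ, D))).ne' hqDpos.ne']
        ring
    rw [Finset.sum_congr rfl fun θ _ => this θ, Finset.sum_sub_distrib,
      ← Finset.sum_mul, ha1, one_mul]
  obtain ⟨hge, heq⟩ := gibbs_sum a c (fun θ => hp0 (θ, D)) hc0 ha1 hc1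
  have hac_iff : a = c ↔ p = pstar := by
    constructor
    · intro h
      funext z
      obtain ⟨θ, d⟩ := z
      rcases eq_or_ne d D with rfl | hd
      · rw [hpstar θ d, if_pos rfl]
        exact congrFun h θ
      · rw [hsupp θ d hd, hpstar θ d, if_neg hd]
    · intro h
      funext θ
      have := congrFun h (θ, D)
      rw [hpstar θ D, if_pos rfl] at this
      exact this
  refine ⟨by rw [hS, hSstar]; linarith, by rw [hSstar]; ring, ?_⟩
  rw [hS, hSstar, ← hac_iff, ← heq]
  constructor
  · intro h; linarith
  · intro h; rw [h]; ring
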